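/- Let (X, 𝔄, μ) be a σ-finite measure space and τ a non-singular measurable transformation. If there exists an increasing sequence (α_j) of positive integers and a family (A_i)_{i∈I} of measurable sets of finite positive measure spanning a closed subspace Y of L^{pq}(X) such that lim_{j→∞} μ(τ^{-α_j}(A_i)) = 0 for all i and sup{μ(τ^{-n}(A_i))/μ(A_i) : i ∈ I, n ∈ ℕ} = ∞, then sup_{n∈ℕ} ‖(C_τ^n)|_Y‖ = ∞ (the restrictions of the iterates of C_τ to Y are not uniformly bounded in operator norm). -/

import Mathlib

open MeasureTheory Filter Set
open scoped ENNReal NNReal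

/-- Decreasing rearrangement `g*(t)` of a measurable function. -/
noncomputable def rearr {X : Type*} [MeasurableSpace X] (μ : Measure X) (g : X → ℂ)
    (t : ℝ) : ℝ≥0∞ :=
  sInf {l : ℝ≥0∞ | μ {x | l < (‖g x‖₊ : ℝ≥0∞)} ≤ ENNReal.ofReal t}

/-- Maximal function `g**(t) = (1/t) ∫_0^t g*(s) ds`. -/
noncomputable def maxFun {X : Type*} [MeasurableSpace X] (μ : Measure X) (g : X → ℂ)
    (t : ℝ) : ℝ≥0∞ :=
  (ENNReal.ofReal t)⁻¹ * ∫⁻ s in Set.Ioc (0:ℝ) t, rearr μ g s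

/-- `‖g‖_{pq}^q = (q/p) ∫_0^∞ (t^{1/p} g**(t))^q dt/t`. -/
noncomputable def lorentzQ {X : Type*} [MeasurableSpace X] (μ : Measure X) (g : X → ℂ)
    (p q : ℝ) : ℝ≥0∞ :=
  ENNReal.ofReal (q / p) *
    ∫⁻ t in Set.Ioi (0:ℝ), (ENNReal.ofReal (t ^ (1/p)) * maxFun μ g t) ^ q / ENNReal.ofReal t

/-- The Lorentz norm `‖g‖_{pq}` for `q < ∞`. -/
noncomputable def lorentzNorm {X : Type*} [MeasurableSpace X] (μ : Measure X) (g : X → ℂ)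
    (p q : ℝ) : ℝ≥0∞ :=
  lorentzQ μ g p q ^ (1 / q)

/-- The Lorentz norm `‖g‖_{p∞} = sup_{t>0} t^{1/p} g**(t)`. -/
noncomputable def lorentzSup {X : Type*} [MeasurableSpace X] (μ : Measure X) (g : X → ℂ)
    (p : ℝ) : ℝ≥0∞ :=
  ⨆ (t : ℝ) (_ : 0 < t), ENNReal.ofReal (t ^ (1/p)) * maxFun μ g t

/-- A non-singular measurable transformation. -/
def Nonsingular {X : Type*} [MeasurableSpace X] (μ : Measure X) (τ : X → X) : Prop :=
  Measurable τ ∧ ∀ A : Set X, MeasurableSet A → μ A = 0 → μ (τ ⁻¹' A) = 0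

lemma rearr_indicator {X : Type*} [MeasurableSpace X] (μ : Measure X) {B : Set X}
    {a : ℝ} (ha : 0 < a) (t : ℝ) :
    rearr μ (B.indicator fun _ => (a:ℂ)) t =
      if ENNReal.ofReal t < μ B then ENNReal.ofReal a else 0 := by
  have hset : ∀ l : ℝ≥0∞, {x | l < (‖(B.indicator fun _ => (a:ℂ)) x‖₊ : ℝ≥0∞)}
      = if l < ENNReal.ofReal a then B else ∅ := by
    intro l
    ext x
    by_cases hx : x ∈ B
    · simp only [Set.indicator_of_mem hx, Set.mem_setOf_eq]
      have : (‖(a:ℂ)‖₊ : ℝ≥0∞) = ENNReal.ofReal a := by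
        rw [Complex.nnnorm_real]
        exact Real.enorm_eq_ofReal ha.le
      rw [this]
      by_cases hl : l < ENNReal.ofReal a <;> simp [hl, hx]
    · simp only [Set.indicator_of_notMem hx, Set.mem_setOf_eq]
      by_cases hl : l < ENNReal.ofReal a <;> simp [hl, hx]
  have hμ : ∀ l : ℝ≥0∞, μ {x | l < (‖(B.indicator fun _ => (a:ℂ)) x‖₊ : ℝ≥0∞)}
      = if l < ENNReal.ofReal a then μ B else 0 := by
    intro l; rw [hset l]; split <;> simp
  unfold rearr
  simp only [hμ]
  by_cases h : ENNReal.ofReal t < μ B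
  · simp only [h, if_true]
    have : {l : ℝ≥0∞ | (if l < ENNReal.ofReal a then μ B else 0) ≤ ENNReal.ofReal t}
        = Set.Ici (ENNReal.ofReal a) := by
      ext l
      by_cases hl : l < ENNReal.ofReal a
      · simp [hl, not_le.mpr h, not_le.mpr hl]
      · simp [hl, le_of_not_gt hl]
    rw [this, csInf_Ici]
  · simp only [h, if_false]
    have : {l : ℝ≥0∞ | (if l < ENNReal.ofReal a then μ B else 0) ≤ ENNReal.ofReal t}
        = Set.univ := by
      ext l
      by_cases hl : l < ENNReal.ofReal a <;> simp [hl, le_of_not_gt h]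
    rw [this, sInf_univ]
    rfl

lemma maxFun_indicator_top {X : Type*} [MeasurableSpace X] (μ : Measure X) {B : Set X}
    {a : ℝ} (ha : 0 < a) (hB : μ B = ⊤) {t : ℝ} (ht : 0 < t) :
    maxFun μ (B.indicator fun _ => (a:ℂ)) t = ENNReal.ofReal a := by
  unfold maxFun
  have : ∀ s ∈ Set.Ioc (0:ℝ) t, rearr μ (B.indicator fun _ => (a:ℂ)) s = ENNReal.ofReal a := by
    intro s _
    rw [rearr_indicator μ ha, hB, if_pos (ENNReal.ofReal_lt_top)]
  rw [setLIntegral_congr_fun measurableSet_Ioc this, setLIntegral_const,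
    Real.volume_Ioc]
  have ht' : ENNReal.ofReal t ≠ 0 := by simp [ht, ht.not_ge]
  rw [sub_zero, ← mul_assoc, mul_comm (ENNReal.ofReal t)⁻¹, mul_assoc,
    ENNReal.inv_mul_cancel ht' ENNReal.ofReal_ne_top, mul_one]

lemma maxFun_indicator {X : Type*} [MeasurableSpace X] (μ : Measure X) {B : Set X}
    {a : ℝ} (ha : 0 < a) (hB0 : 0 < μ B) (hBt : μ B ≠ ⊤) {t : ℝ} (ht : 0 < t) :
    maxFun μ (B.indicator fun _ => (a:ℂ)) t
      = ENNReal.ofReal (a * min t (μ B).toReal / t) := by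
  set m := (μ B).toReal with hm
  have hm0 : 0 < m := ENNReal.toReal_pos hB0.ne' hBt
  have hiff : ∀ s : ℝ, (ENNReal.ofReal s < μ B ↔ s < m) := by
    intro s
    rcases le_or_gt s 0 with hs | hs
    · constructor
      · intro _; exact lt_of_le_of_lt hs hm0
      · intro _; rw [ENNReal.ofReal_eq_zero.mpr hs]; exact hB0
    · exact ENNReal.ofReal_lt_iff_lt_toReal hs.le hBt
  have hre : ∀ s : ℝ, rearr μ (B.indicator fun _ => (a:ℂ)) s
      = if s < m then ENNReal.ofReal a else 0 := by
    intro s; rw [rearr_indicator μ ha]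
    by_cases h : s < m
    · rw [if_pos ((hiff s).mpr h), if_pos h]
    · rw [if_neg (fun hc => h ((hiff s).mp hc)), if_neg h]
  unfold maxFun
  have hint : ∫⁻ s in Set.Ioc (0:ℝ) t, rearr μ (B.indicator fun _ => (a:ℂ)) s
      = ENNReal.ofReal a * ENNReal.ofReal (min t m) := by
    have heq : ∀ s ∈ Set.Ioc (0:ℝ) t, rearr μ (B.indicator fun _ => (a:ℂ)) s
        = Set.indicator (Set.Iio m) (fun _ => ENNReal.ofReal a) s := by
      intro s _
      rw [hre s]
      by_cases h : s < m <;> simp [h, Set.indicator_apply, Set.mem_Iio]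
    rw [setLIntegral_congr_fun measurableSet_Ioc heq,
      lintegral_indicator measurableSet_Iio, Measure.restrict_restrict measurableSet_Iio,
      setLIntegral_const]
    congr 1
    apply le_antisymm
    · have hsub : Set.Iio m ∩ Set.Ioc (0:ℝ) t ⊆ Set.Ioc 0 (min t m) := by
        intro s hs
        exact ⟨hs.2.1, le_min hs.2.2 hs.1.le⟩
      calc volume (Set.Iio m ∩ Set.Ioc (0:ℝ) t) ≤ volume (Set.Ioc (0:ℝ) (min t m)) :=
            measure_mono hsub
        _ = ENNReal.ofReal (min t m) := by rw [Real.volume_Ioc, sub_zero]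
    · have hsub : Set.Ioo 0 (min t m) ⊆ Set.Iio m ∩ Set.Ioc (0:ℝ) t := by
        intro s hs
        exact ⟨hs.2.trans_le (min_le_right _ _), hs.1, (hs.2.trans_le (min_le_left _ _)).le⟩
      calc ENNReal.ofReal (min t m) = volume (Set.Ioo (0:ℝ) (min t m)) := by
            rw [Real.volume_Ioo, sub_zero]
        _ ≤ _ := measure_mono hsub
  rw [hint, ENNReal.ofReal_div_of_pos ht, ENNReal.ofReal_mul ha.le, div_eq_mul_inv,
    mul_comm, mul_assoc]

lemma lint_Ioc_rpow {m r : ℝ} (hm : 0 < m) (hr : -1 < r) :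
    ∫⁻ t in Set.Ioc (0:ℝ) m, ENNReal.ofReal (t ^ r) = ENNReal.ofReal (m ^ (r+1) / (r+1)) := by
  have hint : IntegrableOn (fun t : ℝ => t ^ r) (Set.Ioc 0 m) :=
    (intervalIntegral.intervalIntegrable_rpow' hr).1
  rw [← ofReal_integral_eq_lintegral_ofReal hint ?_]
  · congr 1
    rw [← intervalIntegral.integral_of_le hm.le, integral_rpow (Or.inl hr),
      Real.zero_rpow (by linarith), sub_zero]
  · filter_upwards [ae_restrict_mem measurableSet_Ioc] with t ht
    exact Real.rpow_nonneg ht.1.le r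

lemma lint_Ioi_rpow {m r : ℝ} (hm : 0 < m) (hr : r < -1) :
    ∫⁻ t in Set.Ioi m, ENNReal.ofReal (t ^ r) = ENNReal.ofReal (m ^ (r+1) / (-(r+1))) := by
  rw [← ofReal_integral_eq_lintegral_ofReal (integrableOn_Ioi_rpow_of_lt hr hm) ?_]
  · congr 1
    rw [integral_Ioi_rpow_of_lt hr hm]
    rw [neg_div, div_neg]
  · filter_upwards [ae_restrict_mem measurableSet_Ioi] with t ht
    exact Real.rpow_nonneg (hm.trans ht).le r

lemma lint_Ioi_zero_rpow_top (r : ℝ) :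
    ∫⁻ t in Set.Ioi (0:ℝ), ENNReal.ofReal (t ^ r) = ⊤ := by
  by_contra h
  have hmeas : AEStronglyMeasurable (fun t : ℝ => t ^ r) (volume.restrict (Set.Ioi 0)) := by
    refine ContinuousOn.aestronglyMeasurable ?_ measurableSet_Ioi
    intro x hx
    exact (Real.continuousAt_rpow_const x r (Or.inl (ne_of_gt hx))).continuousWithinAt
  have hnn : 0 ≤ᵐ[volume.restrict (Set.Ioi (0:ℝ))] fun t : ℝ => t ^ r := by
    filter_upwards [ae_restrict_mem measurableSet_Ioi] with t ht
    exact Real.rpow_nonneg ht.le r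
  have := (MeasureTheory.lintegral_ofReal_ne_top_iff_integrable hmeas hnn).1 h
  exact not_integrableOn_Ioi_rpow r this

lemma key_pointwise {t x q p' : ℝ} (ht : 0 < t) (hx : 0 ≤ x) :
    (t ^ (1/p') * (x / t)) ^ q / t = x ^ q * t ^ ((1/p' - 1) * q - 1) := by
  have h1 : t ^ (1/p') * (x / t) = x * t ^ (1/p' - 1) := by
    rw [Real.rpow_sub ht, Real.rpow_one]
    field_simp
  rw [h1, Real.mul_rpow hx (Real.rpow_nonneg ht.le _), ← Real.rpow_mul ht.le,
    mul_div_assoc, Real.rpow_sub ht, Real.rpow_one]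

lemma ofReal_pack {x t q : ℝ} (hx : 0 ≤ x) (ht : 0 < t) (hq : 0 ≤ q) :
    (ENNReal.ofReal x) ^ q / ENNReal.ofReal t = ENNReal.ofReal (x ^ q / t) := by
  rw [ENNReal.ofReal_rpow_of_nonneg hx hq, ENNReal.ofReal_div_of_pos ht]

lemma lorentzQ_indicator {X : Type*} [MeasurableSpace X] (μ : Measure X) {B : Set X}
    {a p q : ℝ} (ha : 0 < a) (hp : 1 < p) (hq : 1 ≤ q) (hB0 : 0 < μ B) (hBt : μ B ≠ ⊤) :
    lorentzQ μ (B.indicator fun _ => (a:ℂ)) p q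
      = ENNReal.ofReal (a ^ q * (μ B).toReal ^ (q/p) * (p/(p-1))) := by
  set m := (μ B).toReal with hmdef
  have hm0 : 0 < m := ENNReal.toReal_pos hB0.ne' hBt
  have hp0 : (0:ℝ) < p := by linarith
  have hq0 : (0:ℝ) < q := by linarith
  unfold lorentzQ
  have h1 : ∀ t ∈ Set.Ioi (0:ℝ),
      (ENNReal.ofReal (t ^ (1/p)) * maxFun μ (B.indicator fun _ => (a:ℂ)) t) ^ q
          / ENNReal.ofReal t
        = ENNReal.ofReal ((a * min t m) ^ q * t ^ ((1/p - 1) * q - 1)) := by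
    intro t ht
    rw [Set.mem_Ioi] at ht
    rw [maxFun_indicator μ ha hB0 hBt ht,
      ← ENNReal.ofReal_mul (Real.rpow_nonneg ht.le _),
      ofReal_pack (mul_nonneg (Real.rpow_nonneg ht.le _)
        (div_nonneg (mul_nonneg ha.le (le_min ht.le hm0.le)) ht.le)) ht hq0.le,
      key_pointwise ht (mul_nonneg ha.le (le_min ht.le hm0.le))]
  rw [setLIntegral_congr_fun measurableSet_Ioi h1]
  rw [← Set.Ioc_union_Ioi_eq_Ioi hm0.le, lintegral_union measurableSet_Ioi
    Set.Ioc_disjoint_Ioi_same]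
  have h2 : ∀ t ∈ Set.Ioc (0:ℝ) m,
      ENNReal.ofReal ((a * min t m) ^ q * t ^ ((1/p - 1) * q - 1))
        = ENNReal.ofReal (a ^ q) * ENNReal.ofReal (t ^ (q/p - 1)) := by
    intro t ht
    rw [min_eq_left ht.2, Real.mul_rpow ha.le ht.1.le, mul_assoc,
      ← Real.rpow_add ht.1, ← ENNReal.ofReal_mul (Real.rpow_nonneg ha.le _)]
    congr 2
    ring
  have h3 : ∀ t ∈ Set.Ioi m,
      ENNReal.ofReal ((a * min t m) ^ q * t ^ ((1/p - 1) * q - 1))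
        = ENNReal.ofReal ((a*m) ^ q) * ENNReal.ofReal (t ^ ((1/p - 1) * q - 1)) := by
    intro t ht
    rw [Set.mem_Ioi] at ht
    rw [min_eq_right ht.le, ENNReal.ofReal_mul (Real.rpow_nonneg (mul_nonneg ha.le hm0.le) _)]
  have hd1 : (0:ℝ) < q/p := div_pos hq0 hp0
  have hd2 : (1/p - 1) * q < 0 :=
    mul_neg_of_neg_of_pos (by have := (div_lt_one hp0).mpr hp; linarith) hq0
  rw [setLIntegral_congr_fun measurableSet_Ioc h2,
    setLIntegral_congr_fun measurableSet_Ioi h3,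
    lintegral_const_mul' _ _ ENNReal.ofReal_ne_top,
    lintegral_const_mul' _ _ ENNReal.ofReal_ne_top,
    lint_Ioc_rpow hm0 (by linarith : (-1:ℝ) < q/p - 1),
    lint_Ioi_rpow hm0 (by linarith : (1/p - 1) * q - 1 < -1)]
  rw [← ENNReal.ofReal_mul (Real.rpow_nonneg ha.le _),
    ← ENNReal.ofReal_mul (Real.rpow_nonneg (mul_nonneg ha.le hm0.le) _),
    ← ENNReal.ofReal_add
      (mul_nonneg (Real.rpow_nonneg ha.le _)
        (div_nonneg (Real.rpow_nonneg hm0.le _) (by linarith)))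
      (mul_nonneg (Real.rpow_nonneg (mul_nonneg ha.le hm0.le) _)
        (div_nonneg (Real.rpow_nonneg hm0.le _) (by linarith))),
    ← ENNReal.ofReal_mul hd1.le]
  congr 1
  have e1 : q/p - 1 + 1 = q/p := by ring
  have e2 : (1/p - 1) * q - 1 + 1 = (1/p - 1) * q := by ring
  rw [e1, e2, Real.mul_rpow ha.le hm0.le]
  have e3 : m ^ q * m ^ ((1/p - 1) * q) = m ^ (q/p) := by
    rw [← Real.rpow_add hm0]
    congr 1
    field_simp
    ring
  have e4 : a ^ q * m ^ q * (m ^ ((1/p - 1) * q) / -((1/p - 1) * q))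
      = a ^ q * m ^ (q/p) * (-((1/p - 1) * q))⁻¹ := by
    rw [div_eq_mul_inv]
    calc a ^ q * m ^ q * (m ^ ((1/p - 1) * q) * (-((1/p - 1) * q))⁻¹)
        = m ^ q * m ^ ((1/p - 1) * q) * (a ^ q * (-((1/p - 1) * q))⁻¹) := by ring
      _ = m ^ (q/p) * (a ^ q * (-((1/p - 1) * q))⁻¹) := by rw [e3]
      _ = a ^ q * m ^ (q/p) * (-((1/p - 1) * q))⁻¹ := by ring
  rw [e4]
  have hp1 : p - 1 ≠ 0 := by linarith
  have e5 : (-((1/p - 1) * q)) = q * (p-1) / p := by field_simp; ring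
  rw [e5]
  field_simp
  ring

lemma lorentzNorm_indicator {X : Type*} [MeasurableSpace X] (μ : Measure X) {B : Set X}
    {a p q : ℝ} (ha : 0 < a) (hp : 1 < p) (hq : 1 ≤ q) (hB0 : 0 < μ B) :
    lorentzNorm μ (B.indicator fun _ => (a:ℂ)) p q
      = ENNReal.ofReal (a * (p/(p-1)) ^ (1/q)) * (μ B) ^ (1/p) := by
  have hp0 : (0:ℝ) < p := by linarith
  have hq0 : (0:ℝ) < q := by linarith
  have hc' : (0:ℝ) < (p/(p-1)) ^ (1/q) :=
    Real.rpow_pos_of_pos (div_pos hp0 (by linarith)) _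
  by_cases hBt : μ B = ⊤
  · rw [hBt]
    have hQ : lorentzQ μ (B.indicator fun _ => (a:ℂ)) p q = ⊤ := by
      unfold lorentzQ
      have h1 : ∀ t ∈ Set.Ioi (0:ℝ),
          (ENNReal.ofReal (t ^ (1/p)) * maxFun μ (B.indicator fun _ => (a:ℂ)) t) ^ q
              / ENNReal.ofReal t
            = ENNReal.ofReal (a ^ q) * ENNReal.ofReal (t ^ (q/p - 1)) := by
        intro t ht
        rw [Set.mem_Ioi] at ht
        have hdiv : t ^ (1/p) * a = t ^ (1/p) * (a * t / t) := by
          rw [mul_div_assoc, div_self ht.ne', mul_one]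
        rw [maxFun_indicator_top μ ha hBt ht,
          ← ENNReal.ofReal_mul (Real.rpow_nonneg ht.le _), hdiv,
          ofReal_pack (mul_nonneg (Real.rpow_nonneg ht.le _)
            (div_nonneg (mul_nonneg ha.le ht.le) ht.le)) ht hq0.le,
          key_pointwise ht (mul_nonneg ha.le ht.le),
          Real.mul_rpow ha.le ht.le, mul_assoc, ← Real.rpow_add ht,
          ← ENNReal.ofReal_mul (Real.rpow_nonneg ha.le _)]
        congr 2
        ring
      rw [setLIntegral_congr_fun measurableSet_Ioi h1,
        lintegral_const_mul' _ _ ENNReal.ofReal_ne_top, lint_Ioi_zero_rpow_top,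
        ENNReal.mul_top (ENNReal.ofReal_pos.mpr (Real.rpow_pos_of_pos ha _)).ne',
        ENNReal.mul_top (ENNReal.ofReal_pos.mpr (div_pos hq0 hp0)).ne']
    unfold lorentzNorm
    rw [hQ, ENNReal.top_rpow_of_pos (by positivity),
      ENNReal.top_rpow_of_pos (by positivity),
      ENNReal.mul_top (ENNReal.ofReal_pos.mpr (mul_pos ha hc')).ne']
  · set m := (μ B).toReal with hmdef
    have hm0 : 0 < m := ENNReal.toReal_pos hB0.ne' hBt
    unfold lorentzNorm
    rw [lorentzQ_indicator μ ha hp hq hB0 hBt,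
      ENNReal.ofReal_rpow_of_nonneg (mul_nonneg (mul_nonneg (Real.rpow_nonneg ha.le _)
        (Real.rpow_nonneg hm0.le _)) (div_nonneg hp0.le (by linarith))) (by positivity)]
    have hreal : (a ^ q * m ^ (q/p) * (p/(p-1))) ^ (1/q)
        = a * m ^ (1/p) * (p/(p-1)) ^ (1/q) := by
      rw [Real.mul_rpow (mul_nonneg (Real.rpow_nonneg ha.le _) (Real.rpow_nonneg hm0.le _))
          (div_nonneg hp0.le (by linarith)),
        Real.mul_rpow (Real.rpow_nonneg ha.le _) (Real.rpow_nonneg hm0.le _),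
        ← Real.rpow_mul ha.le, ← Real.rpow_mul hm0.le,
        mul_one_div_cancel hq0.ne', Real.rpow_one,
        show q/p * (1/q) = 1/p by field_simp]
    rw [hreal]
    have hμ : μ B = ENNReal.ofReal m := (ENNReal.ofReal_toReal hBt).symm
    rw [hμ, ENNReal.ofReal_rpow_of_nonneg hm0.le (by positivity),
      ← ENNReal.ofReal_mul (mul_nonneg ha.le hc'.le)]
    congr 1
    ring

/-- under the Li–Yorke conditions on the family `(A_i)`, the
restrictions of the iterates of `C_τ` to the (closed) span `Y` of the `χ_{A_i}`
are not uniformly bounded in norm. -/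
theorem stmt_19 {X ι : Type*} [MeasurableSpace X] (μ : Measure X) [SigmaFinite μ]
    [Nonempty ι] (τ : X → X) (hns : Nonsingular μ τ)
    (p q : ℝ) (hp : 1 < p) (hq : 1 ≤ q)
    (hbdd : ∃ C : ℝ≥0∞, C < ⊤ ∧
      ∀ g : X → ℂ, lorentzNorm μ (g ∘ τ) p q ≤ C * lorentzNorm μ g p q)
    (A : ι → Set X) (hmeas : ∀ i, MeasurableSet (A i))
    (hpos : ∀ i, 0 < μ (A i)) (hfin : ∀ i, μ (A i) < ⊤)
    (α : ℕ → ℕ) (hα : StrictMono α) (hαpos : ∀ j, 0 < α j)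
    (hlim : ∀ i, Filter.Tendsto (fun j => μ ((τ^[α j]) ⁻¹' A i)) Filter.atTop (nhds 0))
    (hsup : (⨆ i, ⨆ n : ℕ, μ ((τ^[n]) ⁻¹' A i) / μ (A i)) = ⊤) :
    ∀ C : ℝ≥0∞, C < ⊤ → ∃ n : ℕ,
      ∃ g ∈ Submodule.span ℂ {f : X → ℂ | ∃ i, f = (A i).indicator fun _ => (1:ℂ)},
        lorentzNorm μ g p q ≤ 1 ∧ C < lorentzNorm μ (g ∘ τ^[n]) p q := by
  intro C hC
  have hp0 : (0:ℝ) < p := by linarith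
  have hq0 : (0:ℝ) < q := by linarith
  -- find i, n with large ratio
  have hCp : C ^ p < ⊤ := by
    rcases eq_or_ne C 0 with rfl | hC0
    · rw [ENNReal.zero_rpow_of_pos hp0]; exact ENNReal.zero_lt_top
    · exact ENNReal.rpow_lt_top_of_nonneg hp0.le hC.ne
  rw [← hsup] at hCp
  obtain ⟨i, hi⟩ := lt_iSup_iff.mp hCp
  obtain ⟨n, hn⟩ := lt_iSup_iff.mp hi
  refine ⟨n, ?_⟩
  set B : Set X := (τ^[n]) ⁻¹' A i with hBdef
  have hB0 : μ B ≠ 0 := by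
    intro h
    rw [h, ENNReal.zero_div] at hn
    exact zero_le.not_gt hn
  have hμB : C ^ p * μ (A i) < μ B := by
    exact (ENNReal.lt_div_iff_mul_lt (Or.inl (hpos i).ne') (Or.inl (hfin i).ne)).mp hn
  set m := (μ (A i)).toReal with hmdef
  have hm0 : 0 < m := ENNReal.toReal_pos (hpos i).ne' (hfin i).ne
  set c' : ℝ := (p/(p-1)) ^ (1/q) with hc'def
  have hc' : 0 < c' := Real.rpow_pos_of_pos (div_pos hp0 (by linarith)) _
  set a : ℝ := (c' * m ^ (1/p))⁻¹ with hadef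
  have ha : 0 < a := by
    rw [hadef]
    exact inv_pos.mpr (mul_pos hc' (Real.rpow_pos_of_pos hm0 _))
  refine ⟨(A i).indicator fun _ => (a:ℂ), ?_, ?_, ?_⟩
  · have hg : ((A i).indicator fun _ => (a:ℂ))
        = (a:ℂ) • ((A i).indicator fun _ => (1:ℂ)) := by
      funext x
      by_cases hx : x ∈ A i <;> simp [hx]
    rw [hg]
    exact Submodule.smul_mem _ _ (Submodule.subset_span ⟨i, rfl⟩)
  · rw [lorentzNorm_indicator μ ha hp hq (hpos i)]
    have hμA : μ (A i) = ENNReal.ofReal m := (ENNReal.ofReal_toReal (hfin i).ne).symm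
    rw [hμA, ENNReal.ofReal_rpow_of_nonneg hm0.le (by positivity),
      ← ENNReal.ofReal_mul (mul_nonneg ha.le hc'.le)]
    rw [show a * c' * m ^ (1/p) = (c' * m ^ (1/p))⁻¹ * (c' * m ^ (1/p)) by rw [hadef]; ring,
      inv_mul_cancel₀ (mul_pos hc' (Real.rpow_pos_of_pos hm0 _)).ne', ENNReal.ofReal_one]
  · have hcomp : (((A i).indicator fun _ => (a:ℂ)) ∘ τ^[n])
        = B.indicator fun _ => (a:ℂ) := by
      funext x
      by_cases hx : x ∈ B <;>
        simp [Function.comp, Set.indicator_apply, hBdef, Set.mem_preimage] at hx ⊢ <;>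
        simp [hx]
    rw [hcomp, lorentzNorm_indicator μ ha hp hq (pos_iff_ne_zero.mpr hB0)]
    -- key : ofReal (a * c') = ((μ (A i)) ^ (1/p))⁻¹
    have hAfin : (μ (A i)) ^ (1/p) ≠ ⊤ := ENNReal.rpow_ne_top_of_nonneg (by positivity) (hfin i).ne
    have hApos : (μ (A i)) ^ (1/p) ≠ 0 := by
      simp [ENNReal.rpow_eq_zero_iff, (hpos i).ne', (hfin i).ne]
    have hkey : ENNReal.ofReal (a * c') * (μ (A i)) ^ (1/p) = 1 := by
      have hμA : μ (A i) = ENNReal.ofReal m := (ENNReal.ofReal_toReal (hfin i).ne).symm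
      rw [hμA, ENNReal.ofReal_rpow_of_nonneg hm0.le (by positivity),
        ← ENNReal.ofReal_mul (mul_nonneg ha.le hc'.le),
        show a * c' * m ^ (1/p) = (c' * m ^ (1/p))⁻¹ * (c' * m ^ (1/p)) by rw [hadef]; ring,
        inv_mul_cancel₀ (mul_pos hc' (Real.rpow_pos_of_pos hm0 _)).ne', ENNReal.ofReal_one]
    have hinv : ENNReal.ofReal (a * c') = ((μ (A i)) ^ (1/p))⁻¹ :=
      ENNReal.eq_inv_of_mul_eq_one_left hkey
    rw [hinv]
    have hlt : C * (μ (A i)) ^ (1/p) < (μ B) ^ (1/p) := by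
      have h1 : (C ^ p * μ (A i)) ^ (1/p) < (μ B) ^ (1/p) :=
        ENNReal.rpow_lt_rpow hμB (by positivity)
      rwa [ENNReal.mul_rpow_of_nonneg _ _ (by positivity), ← ENNReal.rpow_mul,
        mul_one_div_cancel hp0.ne', ENNReal.rpow_one] at h1
    calc C = C * (μ (A i)) ^ (1/p) * ((μ (A i)) ^ (1/p))⁻¹ := by
          rw [mul_assoc, ENNReal.mul_inv_cancel hApos hAfin, mul_one]
      _ < (μ B) ^ (1/p) * ((μ (A i)) ^ (1/p))⁻¹ := by
          rw [mul_comm _ ((μ (A i)) ^ (1/p))⁻¹, mul_comm _ ((μ (A i)) ^ (1/p))⁻¹]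
          exact ENNReal.mul_lt_mul_right (ENNReal.inv_ne_zero.mpr hAfin)
            (ENNReal.inv_ne_top.mpr hApos) hlt
      _ = ((μ (A i)) ^ (1/p))⁻¹ * (μ B) ^ (1/p) := mul_comm _ _
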